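/- Planarity criterion via a transversal line: a regular C¹ curve c : I → ℝP^3 all of whose tangent lines meet a fixed line l (with c(t) ∉ l for all t) is planar, i.e., its image is contained in a plane through l. -/

import Mathlib

/-!
STATEMENT 17: planarity criterion via a transversal line.  A regular `C¹`
curve in `ℝP³`, all of whose tangent lines meet a fixed line `l` while the
curve avoids `l`, is planar: its image lies in a plane through `l`.

The curve is given by a `C¹` lift `γ : (a,b) → ℝ⁴ \ {0}` with `γ(t)`, `γ'(t)`
linearly independent; its tangent line at `t` is the projectivization of
`span(γ(t), γ'(t))`; the line `l` is a rank-2 linear subspace `L`.  The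
conclusion is a rank-3 linear subspace containing `L` and all `γ(t)`.
-/

open Submodule

abbrev V4 := Fin 4 → ℝ

/-- A function with derivative `0` on a convex set is constant there. -/
lemma aux_const_of_hasDerivAt_zero {s : Set ℝ} (hs : Convex ℝ s) {f : ℝ → ℝ}
    (h : ∀ t ∈ s, HasDerivAt f 0 t) {x y : ℝ} (hx : x ∈ s) (hy : y ∈ s) :
    f x = f y := by
  have := Convex.norm_image_sub_le_of_norm_hasDerivWithin_le
    (f' := fun _ => (0 : ℝ)) (C := 0) (fun t ht => (h t ht).hasDerivWithinAt)
    (fun t _ => by simp) hs hy hx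
  rw [zero_mul] at this
  have := norm_le_zero_iff.mp this
  linarith [sub_eq_zero.mp this]

/-- Nonzero linear functional on `V4` has 3-dimensional kernel. -/
lemma aux_finrank_ker {χ : V4 →ₗ[ℝ] ℝ} (hχ : χ ≠ 0) :
    Module.finrank ℝ (LinearMap.ker χ) = 3 := by
  have h4 : Module.finrank ℝ V4 = 4 := Module.finrank_fin_fun ℝ
  have hrk : Module.finrank ℝ (LinearMap.range χ) = 1 := by
    have hne : LinearMap.range χ ≠ ⊥ := by
      rw [ne_eq, LinearMap.range_eq_bot]
      exact hχ
    have h1 : Module.finrank ℝ (LinearMap.range χ) ≤ 1 := by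
      simpa using (LinearMap.range χ).finrank_le
    have h0 : Module.finrank ℝ (LinearMap.range χ) ≠ 0 := by
      intro h0
      exact hne (Submodule.finrank_eq_zero.mp h0)
    omega
  have := LinearMap.finrank_range_add_finrank_ker χ
  rw [h4, hrk] at this
  omega

/-- Two functionals cutting out a rank-2 subspace of `V4`. -/
lemma aux_exists_functionals (L : Submodule ℝ V4) (hL : Module.finrank ℝ L = 2) :
    ∃ φ ψ : V4 →ₗ[ℝ] ℝ, (∀ x, x ∈ L ↔ φ x = 0 ∧ ψ x = 0) ∧
      ∀ α β : ℝ, ¬(α = 0 ∧ β = 0) → α • φ + β • ψ ≠ 0 := by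
  have h4 : Module.finrank ℝ V4 = 4 := Module.finrank_fin_fun ℝ
  have hQ : Module.finrank ℝ (V4 ⧸ L) = 2 := by
    have := Submodule.finrank_quotient_add_finrank L
    rw [h4, hL] at this; omega
  let e : Module.Basis (Fin 2) ℝ (V4 ⧸ L) := Module.finBasisOfFinrankEq ℝ _ hQ
  refine ⟨(e.coord 0).comp L.mkQ, (e.coord 1).comp L.mkQ, ?_, ?_⟩
  · intro x
    rw [show (x ∈ L ↔ L.mkQ x = 0) from (Submodule.Quotient.mk_eq_zero L).symm]
    constructor
    · intro h; simp [h]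
    · rintro ⟨h0, h1⟩
      refine (e.forall_coord_eq_zero_iff).mp fun i => ?_
      fin_cases i
      · exact h0
      · exact h1
  · intro α β hab h0
    have hval : ∀ i j : Fin 2, (e.coord i) (e j) = if j = i then 1 else 0 := by
      intro i j
      rw [Module.Basis.coord_apply, Module.Basis.repr_self, Finsupp.single_apply]
    obtain ⟨x0, hx0⟩ := L.mkQ_surjective (e 0)
    obtain ⟨x1, hx1⟩ := L.mkQ_surjective (e 1)
    have e0 := congrArg (fun f => f x0) h0
    have e1 := congrArg (fun f => f x1) h0
    simp only [LinearMap.add_apply, LinearMap.smul_apply, LinearMap.comp_apply,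
      LinearMap.zero_apply, smul_eq_mul, hx0, hx1, hval] at e0 e1
    norm_num at e0 e1
    exact hab ⟨e0, e1⟩

theorem tangents_meet_line_implies_planar
    (γ : ℝ → V4) (a b : ℝ)
    (L : Submodule ℝ V4) (hL : Module.finrank ℝ L = 2)
    -- C¹ regular lift
    (hdiff : ∀ t ∈ Set.Ioo a b, DifferentiableAt ℝ γ t)
    (hcont : ContinuousOn (deriv γ) (Set.Ioo a b))
    (hreg : ∀ t ∈ Set.Ioo a b, LinearIndependent ℝ ![γ t, deriv γ t])
    -- every tangent line meets `l` ...
    (hmeet : ∀ t ∈ Set.Ioo a b, span ℝ ({γ t, deriv γ t} : Set V4) ⊓ L ≠ ⊥)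
    -- ... while the curve avoids `l`
    (hoff : ∀ t ∈ Set.Ioo a b, γ t ∉ L) :
    ∃ W : Submodule ℝ V4, Module.finrank ℝ W = 3 ∧ L ≤ W ∧
      ∀ t ∈ Set.Ioo a b, γ t ∈ W := by
  have h4 : Module.finrank ℝ V4 = 4 := Module.finrank_fin_fun ℝ
  rcases Set.eq_empty_or_nonempty (Set.Ioo a b) with hemp | ⟨t₀, ht₀⟩
  · -- empty interval: any 3-dimensional subspace containing `L` works
    have hLne : L ≠ ⊤ := by
      intro h
      rw [h, finrank_top, h4] at hL
      omega
    obtain ⟨v, hv⟩ : ∃ v, v ∉ L := by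
      by_contra h
      push_neg at h
      exact hLne (Submodule.eq_top_iff'.mpr h)
    have hv0 : v ≠ 0 := fun h => hv (h ▸ L.zero_mem)
    refine ⟨L ⊔ span ℝ {v}, ?_, le_sup_left, fun t ht => by simp [hemp] at ht⟩
    have hinf : L ⊓ span ℝ {v} = ⊥ := by
      rw [Submodule.eq_bot_iff]
      intro x hx
      obtain ⟨hx1, hx2⟩ := Submodule.mem_inf.mp hx
      obtain ⟨cc, rfl⟩ := Submodule.mem_span_singleton.mp hx2
      rcases eq_or_ne cc 0 with rfl | hc
      · simp
      · exact absurd (by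
          simpa [smul_smul, inv_mul_cancel₀ hc] using L.smul_mem cc⁻¹ hx1) hv
    have := Submodule.finrank_sup_add_finrank_inf_eq L (span ℝ {v})
    rw [hinf, hL, finrank_span_singleton hv0] at this
    simpa using this
  -- main case
  obtain ⟨φ, ψ, hmemL, hsep⟩ := aux_exists_functionals L hL
  -- continuity of linear functionals
  have hφc : Continuous φ := φ.continuous_of_finiteDimensional
  have hψc : Continuous ψ := ψ.continuous_of_finiteDimensional
  set p : ℝ → ℝ := fun t => φ (γ t) with hp
  set q : ℝ → ℝ := fun t => ψ (γ t) with hq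
  -- γ' is a multiple of γ modulo L
  have hmul : ∀ t ∈ Set.Ioo a b, ∃ k : ℝ,
      φ (deriv γ t) = k * p t ∧ ψ (deriv γ t) = k * q t := by
    intro t ht
    obtain ⟨v, hvmem, hv0⟩ := (Submodule.ne_bot_iff _).mp (hmeet t ht)
    obtain ⟨hvs, hvL⟩ := Submodule.mem_inf.mp hvmem
    obtain ⟨α, β, hαβ⟩ := Submodule.mem_span_pair.mp hvs
    have hβ : β ≠ 0 := by
      intro hβ0
      subst hβ0
      rw [zero_smul, add_zero] at hαβ
      have hα : α ≠ 0 := by rintro rfl; rw [← hαβ] at hv0; simp at hv0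
      exact hoff t ht (by
        have := L.smul_mem α⁻¹ hvL
        rwa [← hαβ, smul_smul, inv_mul_cancel₀ hα, one_smul] at this)
    refine ⟨-(α / β), ?_, ?_⟩
    · have hmem : deriv γ t - (-(α / β)) • γ t ∈ L := by
        have := L.smul_mem β⁻¹ hvL
        rw [← hαβ, smul_add, smul_smul, smul_smul] at this
        have heq : deriv γ t - (-(α / β)) • γ t
            = (β⁻¹ * α) • γ t + (β⁻¹ * β) • deriv γ t := by
          rw [inv_mul_cancel₀ hβ, one_smul]
          field_simp
          module
        rw [heq]; exact this
      have := ((hmemL _).mp hmem).1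
      rw [map_sub, map_smul, sub_eq_zero] at this
      simpa [hp] using this
    · have hmem : deriv γ t - (-(α / β)) • γ t ∈ L := by
        have := L.smul_mem β⁻¹ hvL
        rw [← hαβ, smul_add, smul_smul, smul_smul] at this
        have heq : deriv γ t - (-(α / β)) • γ t
            = (β⁻¹ * α) • γ t + (β⁻¹ * β) • deriv γ t := by
          rw [inv_mul_cancel₀ hβ, one_smul]
          field_simp
          module
        rw [heq]; exact this
      have := ((hmemL _).mp hmem).2
      rw [map_sub, map_smul, sub_eq_zero] at this
      simpa [hq] using this
  -- positive denominator
  have hpos : ∀ t ∈ Set.Ioo a b, 0 < p t ^ 2 + q t ^ 2 := by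
    intro t ht
    rcases (lt_or_eq_of_le (by positivity : (0:ℝ) ≤ p t ^ 2 + q t ^ 2)) with h | h
    · exact h
    · exfalso
      have hp0 : p t = 0 := by nlinarith [sq_nonneg (p t), sq_nonneg (q t)]
      have hq0 : q t = 0 := by nlinarith [sq_nonneg (p t), sq_nonneg (q t)]
      exact hoff t ht ((hmemL _).mpr ⟨hp0, hq0⟩)
  -- the logarithmic-derivative function
  set c : ℝ → ℝ := fun t =>
    (φ (deriv γ t) * p t + ψ (deriv γ t) * q t) / (p t ^ 2 + q t ^ 2) with hc
  have hceq : ∀ t ∈ Set.Ioo a b,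
      φ (deriv γ t) = c t * p t ∧ ψ (deriv γ t) = c t * q t := by
    intro t ht
    obtain ⟨k, hk1, hk2⟩ := hmul t ht
    have hd := hpos t ht
    have hck : c t = k := by
      rw [hc]
      simp only [hk1, hk2]
      field_simp
    rw [hck]; exact ⟨hk1, hk2⟩
  -- continuity facts
  have hγc : ContinuousOn γ (Set.Ioo a b) :=
    fun t ht => (hdiff t ht).continuousAt.continuousWithinAt
  have hpc : ContinuousOn p (Set.Ioo a b) := hφc.comp_continuousOn hγc
  have hqc : ContinuousOn q (Set.Ioo a b) := hψc.comp_continuousOn hγc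
  have hφdc : ContinuousOn (fun t => φ (deriv γ t)) (Set.Ioo a b) :=
    hφc.comp_continuousOn hcont
  have hψdc : ContinuousOn (fun t => ψ (deriv γ t)) (Set.Ioo a b) :=
    hψc.comp_continuousOn hcont
  have hcc : ContinuousOn c (Set.Ioo a b) := by
    apply ContinuousOn.div
    · exact (hφdc.mul hpc).add (hψdc.mul hqc)
    · exact (hpc.pow 2).add (hqc.pow 2)
    · exact fun t ht => (hpos t ht).ne'
  -- primitive of c
  set C : ℝ → ℝ := fun t => ∫ s in t₀..t, c s with hC
  have hCd : ∀ t ∈ Set.Ioo a b, HasDerivAt C (c t) t := by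
    intro t ht
    apply intervalIntegral.integral_hasDerivAt_right
    · apply ContinuousOn.intervalIntegrable
      exact hcc.mono (Set.ordConnected_Ioo.uIcc_subset ht₀ ht)
    · exact hcc.stronglyMeasurableAtFilter isOpen_Ioo t ht
    · exact hcc.continuousAt (isOpen_Ioo.mem_nhds ht)
  -- Wronskian-type function
  set g : ℝ → ℝ := fun t => p t * q t₀ - q t * p t₀ with hg
  -- derivative of p and q
  have hpd : ∀ t ∈ Set.Ioo a b, HasDerivAt p (φ (deriv γ t)) t := by
    intro t ht
    have h1 : HasDerivAt γ (deriv γ t) t := (hdiff t ht).hasDerivAt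
    exact (LinearMap.toContinuousLinearMap φ).hasFDerivAt.comp_hasDerivAt t h1
  have hqd : ∀ t ∈ Set.Ioo a b, HasDerivAt q (ψ (deriv γ t)) t := by
    intro t ht
    have h1 : HasDerivAt γ (deriv γ t) t := (hdiff t ht).hasDerivAt
    exact (LinearMap.toContinuousLinearMap ψ).hasFDerivAt.comp_hasDerivAt t h1
  have hgd : ∀ t ∈ Set.Ioo a b, HasDerivAt g (c t * g t) t := by
    intro t ht
    have := ((hpd t ht).mul_const (q t₀)).sub ((hqd t ht).mul_const (p t₀))
    obtain ⟨h1, h2⟩ := hceq t ht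
    rw [h1, h2] at this
    convert this using 1
    · rfl
    · rfl
    · rfl
    rw [hg]; ring
  -- integrating factor
  set u : ℝ → ℝ := fun t => g t * Real.exp (-C t) with hu
  have hud : ∀ t ∈ Set.Ioo a b, HasDerivAt u 0 t := by
    intro t ht
    have hE : HasDerivAt (fun t => Real.exp (-C t)) (Real.exp (-C t) * (-c t)) t :=
      (Real.hasDerivAt_exp _).comp t ((hCd t ht).neg)
    have := (hgd t ht).mul hE
    convert this using 1
    · rfl
    · rfl
    · rfl
    ring
  have huconst : ∀ t ∈ Set.Ioo a b, u t = u t₀ :=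
    fun t ht => aux_const_of_hasDerivAt_zero (convex_Ioo a b) hud ht ht₀
  have hg0 : ∀ t ∈ Set.Ioo a b, g t = 0 := by
    intro t ht
    have h1 := huconst t ht
    have h2 : u t₀ = 0 := by
      show (p t₀ * q t₀ - q t₀ * p t₀) * Real.exp (-C t₀) = 0
      ring
    rw [h2, hu] at h1
    have := Real.exp_pos (-C t)
    rcases mul_eq_zero.mp h1 with h | h
    · exact h
    · exact absurd h this.ne'
  -- the plane
  set χ : V4 →ₗ[ℝ] ℝ := q t₀ • φ - p t₀ • ψ with hχ
  have hχγ : ∀ t ∈ Set.Ioo a b, χ (γ t) = 0 := by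
    intro t ht
    have h : p t * q t₀ - q t * p t₀ = 0 := hg0 t ht
    show (q t₀ • φ - p t₀ • ψ) (γ t) = 0
    simp only [LinearMap.sub_apply, LinearMap.smul_apply, smul_eq_mul]
    show q t₀ * p t - p t₀ * q t = 0
    linarith
  have hχne : χ ≠ 0 := by
    have hpq : ¬ (q t₀ = 0 ∧ -(p t₀) = 0) := by
      rintro ⟨h1, h2⟩
      exact hoff t₀ ht₀ ((hmemL _).mpr ⟨by linarith, h1⟩)
    have := hsep (q t₀) (-(p t₀)) hpq
    intro h0
    apply this
    rw [← h0, hχ]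
    refine LinearMap.ext fun x => ?_
    simp only [LinearMap.add_apply, LinearMap.sub_apply, LinearMap.smul_apply, smul_eq_mul]
    ring
  refine ⟨LinearMap.ker χ, aux_finrank_ker hχne, ?_, ?_⟩
  · intro x hx
    obtain ⟨h1, h2⟩ := (hmemL x).mp hx
    rw [LinearMap.mem_ker, hχ]
    simp [h1, h2]
  · exact fun t ht => LinearMap.mem_ker.mpr (hχγ t ht)
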